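/- Let n ≥ 1 and let s be a real number with 0 < s < n. There exists a real constant c > 0 such that for every Schwartz function f : ℝⁿ → ℂ the functions x ↦ ‖x‖^{−s} · (𝓕 f)(x) and x ↦ ‖x‖^{s−n} · f(x) are both integrable on ℝⁿ and ∫_{ℝⁿ} ‖x‖^{−s} (𝓕 f)(x) dx = c · ∫_{ℝⁿ} ‖x‖^{s−n} f(x) dx. (Equivalently, the distributional Fourier transform of the Riesz kernel ‖·‖^{−s} is a positive multiple of ‖·‖^{s−n}.) -/

import Mathlib

open MeasureTheory
open scoped FourierTransform

open Set Real
open scoped RealInnerProductSpace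

lemma oneD_int {c : ℝ} (hc : -1 < c) :
    IntegrableOn (fun t : ℝ => |t| ^ c) (Icc (-1) 1) volume := by
  have h01 : IntegrableOn (fun t : ℝ => |t| ^ c) (Icc 0 1) volume := by
    rw [integrableOn_Icc_iff_integrableOn_Ioc]
    have h1 : IntegrableOn (fun t : ℝ => t ^ c) (Ioc 0 1) volume :=
      (intervalIntegrable_iff_integrableOn_Ioc_of_le (by norm_num)).1
        (intervalIntegral.intervalIntegrable_rpow' hc)
    exact h1.congr_fun (fun t ht => by rw [abs_of_pos ht.1]) measurableSet_Ioc
  have hneg : IntegrableOn (fun t : ℝ => |t| ^ c) (Icc (-1) 0) volume := by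
    have hmp : MeasurePreserving (fun x : ℝ => -x) volume volume :=
      Measure.measurePreserving_neg volume
    have hemb : MeasurableEmbedding (fun x : ℝ => -x) :=
      (Homeomorph.neg ℝ).measurableEmbedding
    refine (integrable_indicator_iff measurableSet_Icc).1 ?_
    have h01' := (integrable_indicator_iff measurableSet_Icc).2 h01
    have := (hmp.integrable_comp_emb hemb).2 h01'
    apply this.congr
    filter_upwards with x
    simp only [Function.comp_apply, indicator]
    have hiff : -x ∈ Icc (0:ℝ) 1 ↔ x ∈ Icc (-1:ℝ) 0 := by
      simp only [mem_Icc, neg_le, le_neg]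
      constructor <;> intro h <;> exact ⟨by linarith [h.2], by linarith [h.1]⟩
    rw [abs_neg]
    by_cases hx : x ∈ Icc (-1:ℝ) 0
    · rw [if_pos (hiff.2 hx), if_pos hx]
    · rw [if_neg (fun h => hx (hiff.1 h)), if_neg hx]
  have hU : Icc (-1:ℝ) 1 = Icc (-1) 0 ∪ Icc 0 1 := by
    rw [Icc_union_Icc_eq_Icc] <;> norm_num
  rw [hU]
  exact hneg.union h01

lemma ker_ball {n : ℕ} (hn : 1 ≤ n) {p : ℝ} (hp : 0 < p) (hpn : p < n) :
    IntegrableOn (fun x : EuclideanSpace ℝ (Fin n) => ‖x‖ ^ (-p))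
      (Metric.ball 0 1) volume := by
  set V := EuclideanSpace ℝ (Fin n)
  have hnpos : (0:ℝ) < n := by exact_mod_cast hn
  set c : ℝ := -(p / n) with hc_def
  have hc1 : -1 < c := by
    rw [hc_def, neg_lt_neg_iff]
    rw [div_lt_one hnpos]; exact hpn
  have hc0 : c ≤ 0 := neg_nonpos.2 (by positivity)
  -- the 1D factor
  set h : ℝ → ℝ := (Icc (-1:ℝ) 1).indicator (fun t => |t| ^ c) with hh_def
  have hint : Integrable h volume :=
    (integrable_indicator_iff measurableSet_Icc).2 (oneD_int hc1)
  have hnonneg : ∀ t, 0 ≤ h t := fun t =>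
    indicator_nonneg (fun t _ => rpow_nonneg (abs_nonneg t) c) t
  -- product majorant on pi space
  have hG : Integrable (fun y : Fin n → ℝ => ∏ i, h (y i)) volume :=
    Integrable.fintype_prod (𝕜 := ℝ) (f := fun _ : Fin n => h) (fun _ => hint)
  -- transfer to Euclidean space
  have hmp : MeasurePreserving (⇑(MeasurableEquiv.toLp 2 (Fin n → ℝ)))
      volume volume := (EuclideanSpace.volume_preserving_symm_measurableEquiv_toLp (Fin n)).symm
  refine (integrable_indicator_iff measurableSet_ball).1 ?_
  rw [← hmp.integrable_comp_emb (MeasurableEquiv.measurableEmbedding _)]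
  -- a.e. all coordinates nonzero
  have hae : ∀ᵐ y : Fin n → ℝ, ∀ i, y i ≠ 0 := by
    rw [ae_all_iff]
    intro i
    rw [ae_iff]
    have : {y : Fin n → ℝ | ¬ y i ≠ 0} = {y | y i = 0} := by ext y; simp
    rw [this, volume_pi]
    exact Measure.pi_hyperplane _ i 0
  apply hG.mono'
  · -- measurability
    apply Measurable.aestronglyMeasurable
    exact (Measurable.indicator (by fun_prop) measurableSet_ball).comp
      (MeasurableEquiv.toLp 2 (Fin n → ℝ)).measurable
  · filter_upwards [hae] with y hy
    set x : V := MeasurableEquiv.toLp 2 (Fin n → ℝ) y with hx_def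
    have hxy : ∀ i, x i = y i := fun i => rfl
    have hcoord : ∀ i, |y i| ≤ ‖x‖ := by
      intro i
      rw [EuclideanSpace.norm_eq]
      have h1 : |y i| = √(‖x i‖ ^ 2) := by
        rw [hxy i, Real.sqrt_sq_eq_abs, Real.norm_eq_abs, abs_abs]
      rw [h1]
      apply Real.sqrt_le_sqrt
      exact Finset.single_le_sum (f := fun i => ‖x i‖ ^ 2)
        (fun i _ => sq_nonneg _) (Finset.mem_univ i)
    have hxne : x ≠ 0 := by
      intro h0
      exact hy ⟨0, hn⟩ (by rw [← hxy ⟨0, hn⟩, h0]; rfl)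
    have hxpos : 0 < ‖x‖ := norm_pos_iff.2 hxne
    rw [Function.comp_apply]
    by_cases hxball : x ∈ Metric.ball (0:V) 1
    · rw [indicator_of_mem hxball]
      have hx1 : ‖x‖ < 1 := by simpa using hxball
      rw [Real.norm_eq_abs, abs_of_nonneg (rpow_nonneg (norm_nonneg x) _)]
      have key : ‖x‖ ^ (-p) = ∏ _i : Fin n, ‖x‖ ^ c := by
        rw [Finset.prod_const, Finset.card_univ, Fintype.card_fin,
          ← Real.rpow_natCast (‖x‖ ^ c) n, ← Real.rpow_mul (norm_nonneg x)]
        rw [hc_def]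
        congr 1
        field_simp
      rw [key]
      apply Finset.prod_le_prod (fun i _ => rpow_nonneg (norm_nonneg x) c)
      intro i _
      have hyi : y i ∈ Icc (-1:ℝ) 1 := by
        have := (hcoord i).trans_lt hx1
        rw [abs_lt] at this
        exact ⟨this.1.le, this.2.le⟩
      rw [hh_def, indicator_of_mem hyi]
      exact Real.rpow_le_rpow_of_nonpos (abs_pos.2 (hy i)) (hcoord i) hc0
    · rw [indicator_of_notMem hxball]
      rw [norm_zero]
      exact Finset.prod_nonneg (fun i _ => hnonneg (y i))

lemma ker_smul_int {n : ℕ} (hn : 1 ≤ n) {p : ℝ} (hp : 0 < p) (hpn : p < n)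
    (g : SchwartzMap (EuclideanSpace ℝ (Fin n)) ℂ) :
    Integrable (fun x : EuclideanSpace ℝ (Fin n) => (‖x‖ ^ (-p) : ℝ) • g x) volume := by
  set V := EuclideanSpace ℝ (Fin n)
  have hmeas : AEStronglyMeasurable (fun x : V => (‖x‖ ^ (-p) : ℝ) • g x) volume := by
    apply AEStronglyMeasurable.fun_smul
    · exact (Measurable.aestronglyMeasurable (by fun_prop))
    · exact g.continuous.aestronglyMeasurable
  obtain ⟨C, hCpos, hC⟩ := g.decay 0 0
  have hC' : ∀ x, ‖g x‖ ≤ C := by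
    intro x
    have := hC x
    simpa using this
  rw [← integrableOn_univ, ← union_compl_self (Metric.ball (0:V) 1)]
  apply IntegrableOn.union
  · -- on the ball
    apply Integrable.mono' (((ker_ball hn hp hpn).const_mul C))
    · exact hmeas.restrict
    · rw [ae_restrict_iff' measurableSet_ball]
      filter_upwards with x hx
      rw [norm_smul, Real.norm_eq_abs, abs_of_nonneg (rpow_nonneg (norm_nonneg x) _),
        mul_comm C]
      exact mul_le_mul_of_nonneg_left (hC' x) (rpow_nonneg (norm_nonneg x) _)
  · -- off the ball
    apply Integrable.mono' g.integrable.norm.restrict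
    · exact hmeas.restrict
    · rw [ae_restrict_iff' measurableSet_ball.compl]
      filter_upwards with x hx
      rw [norm_smul, Real.norm_eq_abs, abs_of_nonneg (rpow_nonneg (norm_nonneg x) _)]
      have h1 : (1:ℝ) ≤ ‖x‖ := by
        simp only [mem_compl_iff, Metric.mem_ball, dist_zero_right, not_lt] at hx
        exact hx
      nth_rewrite 2 [← one_mul ‖g x‖]
      exact mul_le_mul_of_nonneg_right
        (Real.rpow_le_one_of_one_le_of_nonpos h1 (by linarith)) (norm_nonneg _)

lemma gamma_pt {p : ℝ} (hp : 0 < p) {x : ℝ} (hx : 0 < x) :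
    ∫ t in Ioi (0:ℝ), t ^ (p/2 - 1) * Real.exp (-(π * x^2 * t))
      = (π ^ (-(p/2)) * Real.Gamma (p/2)) * x ^ (-p) := by
  have h := Real.integral_rpow_mul_exp_neg_mul_Ioi (a := p/2) (r := π * x^2)
    (by positivity) (by positivity)
  rw [h, one_div, ← Real.rpow_neg_one (π * x^2), ← Real.rpow_mul
    (le_of_lt (by positivity : (0:ℝ) < π * x^2)),
    Real.mul_rpow pi_pos.le (by positivity : (0:ℝ) ≤ x^2),
    ← Real.rpow_natCast x 2, ← Real.rpow_mul hx.le]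
  push_cast
  ring_nf

lemma fub {n : ℕ} (hn : 1 ≤ n) {p : ℝ} (hp : 0 < p) (hpn : p < n)
    (g : SchwartzMap (EuclideanSpace ℝ (Fin n)) ℂ) :
    (∫ t in Ioi (0:ℝ), (t ^ (p/2 - 1) : ℝ) •
        ∫ x : EuclideanSpace ℝ (Fin n), (Real.exp (-(π * ‖x‖^2 * t)) : ℝ) • g x)
      = (π ^ (-(p/2)) * Real.Gamma (p/2)) •
        ∫ x : EuclideanSpace ℝ (Fin n), (‖x‖ ^ (-p) : ℝ) • g x := by
  set V := EuclideanSpace ℝ (Fin n)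
  set A : ℝ := π ^ (-(p/2)) * Real.Gamma (p/2) with hA
  set F : ℝ → V → ℂ := fun t x => (t ^ (p/2 - 1) * Real.exp (-(π * ‖x‖^2 * t))) • g x
    with hF
  have hp2 : (-1:ℝ) < p/2 - 1 := by linarith [half_pos hp]
  haveI : Nontrivial V := ⟨⟨0, EuclideanSpace.single ⟨0, hn⟩ 1, by
    intro h
    have := congrArg (fun v : V => v ⟨0, hn⟩) h
    simp [EuclideanSpace.single] at this⟩⟩
  have hae0 : ∀ᵐ x : V ∂volume, x ≠ 0 := by
    rw [ae_iff]
    have : {x : V | ¬ x ≠ 0} = {(0:V)} := by ext y; simp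
    rw [this]
    exact measure_singleton 0
  have h_inner_t : ∀ x : V, x ≠ 0 →
      IntegrableOn (fun t : ℝ => t ^ (p/2 - 1) * Real.exp (-(π * ‖x‖^2 * t)))
        (Ioi 0) volume := by
    intro x hx
    have hb : (0:ℝ) < π * ‖x‖^2 := mul_pos pi_pos (pow_pos (norm_pos_iff.2 hx) 2)
    have h1 := integrableOn_rpow_mul_exp_neg_mul_rpow hp2 one_pos hb
    exact h1.congr_fun (fun t ht => by dsimp only; rw [Real.rpow_one, neg_mul]) measurableSet_Ioi
  have hmeasF : AEStronglyMeasurable (Function.uncurry F)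
      ((volume.restrict (Ioi 0)).prod volume) := by
    apply AEStronglyMeasurable.fun_smul
    · exact Measurable.aestronglyMeasurable (by fun_prop)
    · exact (g.continuous.comp continuous_snd).aestronglyMeasurable
  have hFint : Integrable (Function.uncurry F) ((volume.restrict (Ioi 0)).prod volume) := by
    rw [integrable_prod_iff' hmeasF]
    constructor
    · filter_upwards [hae0] with x hx
      exact ((h_inner_t x hx).smul_const (g x))
    · apply Integrable.congr (((ker_smul_int hn hp hpn g).norm.const_mul A))
      filter_upwards [hae0] with x hx
      have hstep : ∀ t ∈ Ioi (0:ℝ),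
          ‖Function.uncurry F (t, x)‖
            = t ^ (p/2 - 1) * Real.exp (-(π * ‖x‖^2 * t)) * ‖g x‖ := by
        intro t ht
        rw [Function.uncurry_apply_pair, hF, norm_smul, Real.norm_eq_abs,
          abs_of_nonneg (mul_nonneg (Real.rpow_nonneg (le_of_lt ht) _) (Real.exp_pos _).le)]
      rw [setIntegral_congr_fun measurableSet_Ioi hstep, integral_mul_const,
        gamma_pt hp (norm_pos_iff.2 hx), norm_smul, Real.norm_eq_abs,
        abs_of_nonneg (rpow_nonneg (norm_nonneg x) _)]
      ring
  calc (∫ t in Ioi (0:ℝ), (t ^ (p/2 - 1) : ℝ) •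
        ∫ x : V, (Real.exp (-(π * ‖x‖^2 * t)) : ℝ) • g x)
      = ∫ t in Ioi (0:ℝ), ∫ x : V, F t x := by
        refine integral_congr_ae (Filter.Eventually.of_forall fun t => ?_)
        dsimp only
        rw [← integral_smul]
        exact integral_congr_ae (Filter.Eventually.of_forall fun x => (mul_smul _ _ _).symm)
    _ = ∫ x : V, ∫ t in Ioi (0:ℝ), F t x := integral_integral_swap hFint
    _ = ∫ x : V, A • ((‖x‖ ^ (-p) : ℝ) • g x) := by
        refine integral_congr_ae ?_
        filter_upwards [hae0] with x hx
        show (∫ t in Ioi (0:ℝ), (fun s : ℝ => s ^ (p/2 - 1) * Real.exp (-(π * ‖x‖^2 * s))) t • g x) = _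
        rw [integral_smul_const, gamma_pt hp (norm_pos_iff.2 hx), mul_smul]
    _ = A • ∫ x : V, (‖x‖ ^ (-p) : ℝ) • g x := integral_smul A _

lemma parseval_gauss {n : ℕ} (f : SchwartzMap (EuclideanSpace ℝ (Fin n)) ℂ)
    {t : ℝ} (ht : 0 < t) :
    ∫ x : EuclideanSpace ℝ (Fin n), (Real.exp (-(π * ‖x‖^2 * t)) : ℝ) • 𝓕 (⇑f) x
      = (t ^ (-(n:ℝ)/2) : ℝ) •
        ∫ ξ : EuclideanSpace ℝ (Fin n), (Real.exp (-(π * ‖ξ‖^2 * (1/t))) : ℝ) • f ξ := by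
  set V := EuclideanSpace ℝ (Fin n)
  have hb : (0:ℝ) < ((π * t : ℝ) : ℂ).re := by
    rw [Complex.ofReal_re]; positivity
  have hint : Integrable (fun v : V => Complex.exp (-((π * t : ℝ) : ℂ) * (‖v‖:ℂ)^2)) volume := by
    have := GaussianFourier.integrable_cexp_neg_mul_sq_norm_add (V := V) hb 0 0
    simpa using this
  have hpar : ∫ ξ : V, (𝓕 (fun v : V => Complex.exp (-((π * t : ℝ) : ℂ) * (‖v‖:ℂ)^2)) ξ) • f ξ
      = ∫ x : V, Complex.exp (-((π * t : ℝ) : ℂ) * (‖x‖:ℂ)^2) • 𝓕 (⇑f) x := by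
    simpa [Real.fourier_eq, VectorFourier.fourierIntegral] using VectorFourier.integral_fourierIntegral_smul_eq_flip
      (L := innerₗ V) Real.continuous_fourierChar continuous_inner hint f.integrable
  have hgauss : ∀ ξ : V, 𝓕 (fun v : V => Complex.exp (-((π * t : ℝ) : ℂ) * (‖v‖:ℂ)^2)) ξ
      = ((t ^ (-(n:ℝ)/2) : ℝ) : ℂ) * ((Real.exp (-(π * ‖ξ‖^2 * (1/t))) : ℝ) : ℂ) := by
    intro ξ
    rw [fourier_gaussian_innerProductSpace hb ξ]
    have h1 : ((π : ℂ) / ((π * t : ℝ) : ℂ)) = ((1/t : ℝ) : ℂ) := by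
      rw [Complex.ofReal_mul, one_div, Complex.ofReal_inv, div_eq_mul_inv, mul_inv,
        ← mul_assoc, mul_inv_cancel₀ (Complex.ofReal_ne_zero.2 pi_ne_zero), one_mul]
    have hrank : (Module.finrank ℝ V : ℂ) = (n : ℂ) := by
      norm_cast
      exact finrank_euclideanSpace_fin
    rw [h1, hrank]
    have h2 : ((1/t : ℝ) : ℂ) ^ ((n : ℂ)/2) = ((t ^ (-(n:ℝ)/2) : ℝ) : ℂ) := by
      rw [show ((n:ℂ)/2) = (((n:ℝ)/2 : ℝ) : ℂ) by push_cast; ring,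
        ← Complex.ofReal_cpow (by positivity : (0:ℝ) ≤ 1/t)]
      congr 1
      rw [one_div, ← Real.rpow_neg_one t, ← Real.rpow_mul ht.le]
      congr 1
      ring
    rw [h2]
    congr 1
    rw [Complex.ofReal_exp]
    congr 1
    have hπ : (π:ℂ) ≠ 0 := Complex.ofReal_ne_zero.2 Real.pi_ne_zero
    have hτ : (t:ℂ) ≠ 0 := Complex.ofReal_ne_zero.2 ht.ne'
    push_cast
    rw [div_eq_iff (mul_ne_zero hπ hτ)]
    field_simp
  calc ∫ x : V, (Real.exp (-(π * ‖x‖^2 * t)) : ℝ) • 𝓕 (⇑f) x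
      = ∫ x : V, Complex.exp (-((π * t : ℝ) : ℂ) * (‖x‖:ℂ)^2) • 𝓕 (⇑f) x := by
        refine integral_congr_ae (Filter.Eventually.of_forall fun x => ?_)
        dsimp only
        rw [Complex.real_smul, smul_eq_mul]
        congr 1
        rw [Complex.ofReal_exp]
        congr 1
        push_cast
        ring
    _ = ∫ ξ : V, (𝓕 (fun v : V => Complex.exp (-((π * t : ℝ) : ℂ) * (‖v‖:ℂ)^2)) ξ) • f ξ :=
        hpar.symm
    _ = ∫ ξ : V, (t ^ (-(n:ℝ)/2) : ℝ) • ((Real.exp (-(π * ‖ξ‖^2 * (1/t))) : ℝ) • f ξ) := by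
        refine integral_congr_ae (Filter.Eventually.of_forall fun ξ => ?_)
        dsimp only
        simp only [hgauss ξ, Complex.real_smul, smul_eq_mul, mul_assoc]
    _ = (t ^ (-(n:ℝ)/2) : ℝ) • ∫ ξ : V, (Real.exp (-(π * ‖ξ‖^2 * (1/t))) : ℝ) • f ξ :=
        integral_smul _ _

/-- Proposition 1.2, analytic core in the Euclidean case: the distributional
Fourier transform of the Riesz kernel `‖·‖^(−s)` is a positive multiple of
`‖·‖^(s−n)`, in the form of the identity
`∫ ‖x‖^(−s) (𝓕 f)(x) dx = c ∫ ‖x‖^(s−n) f(x) dx` for all Schwartz `f`. -/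
theorem stmt4 (n : ℕ) (hn : 1 ≤ n) (s : ℝ) (hs0 : 0 < s) (hsn : s < n) :
    ∃ c : ℝ, 0 < c ∧
      ∀ f : SchwartzMap (EuclideanSpace ℝ (Fin n)) ℂ,
        Integrable (fun x : EuclideanSpace ℝ (Fin n) =>
          (‖x‖ ^ (-s) : ℝ) • 𝓕 (⇑f) x) volume ∧
        Integrable (fun x : EuclideanSpace ℝ (Fin n) =>
          (‖x‖ ^ (s - n) : ℝ) • f x) volume ∧
        ∫ x : EuclideanSpace ℝ (Fin n), (‖x‖ ^ (-s) : ℝ) • 𝓕 (⇑f) x =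
          c • ∫ x : EuclideanSpace ℝ (Fin n), (‖x‖ ^ (s - n) : ℝ) • f x := by
  set V := EuclideanSpace ℝ (Fin n)
  have hns : (0:ℝ) < (n:ℝ) - s := by
    have : (s:ℝ) < n := hsn
    linarith
  have hnsn : (n:ℝ) - s < n := by linarith
  set A : ℝ := π ^ (-(s/2)) * Real.Gamma (s/2) with hA
  set B : ℝ := π ^ (-(((n:ℝ)-s)/2)) * Real.Gamma (((n:ℝ)-s)/2) with hB
  have hApos : 0 < A := mul_pos (rpow_pos_of_pos pi_pos _) (Real.Gamma_pos_of_pos (by linarith))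
  have hBpos : 0 < B := mul_pos (rpow_pos_of_pos pi_pos _) (Real.Gamma_pos_of_pos (by linarith))
  refine ⟨A⁻¹ * B, mul_pos (inv_pos.2 hApos) hBpos, fun f => ?_⟩
  set g1 : SchwartzMap V ℂ := SchwartzMap.fourierTransformCLM ℂ f with hg1
  have hcoe : ⇑g1 = 𝓕 ⇑f := rfl
  have Int1 : Integrable (fun x : V => (‖x‖ ^ (-s) : ℝ) • 𝓕 (⇑f) x) volume := by
    rw [← hcoe]; exact ker_smul_int hn hs0 hsn g1
  have Int2 : Integrable (fun x : V => (‖x‖ ^ (s - n) : ℝ) • f x) volume := by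
    have h := ker_smul_int hn hns hnsn f
    simpa [neg_sub] using h
  refine ⟨Int1, Int2, ?_⟩
  -- the two evaluations of the common double integral
  set h : ℝ → ℂ := fun u => ∫ x : V, (Real.exp (-(π * ‖x‖^2 * u)) : ℝ) • f x with hh
  set G : ℝ → ℂ := fun u => (u ^ (((n:ℝ)-s)/2 - 1) : ℝ) • h u with hG
  have E1 : (∫ t in Ioi (0:ℝ), (t ^ (s/2 - 1) : ℝ) •
        ∫ x : V, (Real.exp (-(π * ‖x‖^2 * t)) : ℝ) • 𝓕 (⇑f) x)
      = A • ∫ x : V, (‖x‖ ^ (-s) : ℝ) • 𝓕 (⇑f) x := by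
    rw [← hcoe]; exact fub hn hs0 hsn g1
  have E2 : (∫ t in Ioi (0:ℝ), (t ^ (s/2 - 1) : ℝ) •
        ∫ x : V, (Real.exp (-(π * ‖x‖^2 * t)) : ℝ) • 𝓕 (⇑f) x)
      = B • ∫ x : V, (‖x‖ ^ (s - n) : ℝ) • f x := by
    have step1 : (∫ t in Ioi (0:ℝ), (t ^ (s/2 - 1) : ℝ) •
          ∫ x : V, (Real.exp (-(π * ‖x‖^2 * t)) : ℝ) • 𝓕 (⇑f) x)
        = ∫ t in Ioi (0:ℝ), (|(-1:ℝ)| * t ^ ((-1:ℝ) - 1)) • G (t ^ (-1:ℝ)) := by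
      refine setIntegral_congr_fun measurableSet_Ioi (fun t ht => ?_)
      rw [mem_Ioi] at ht
      rw [parseval_gauss f ht, hG]
      dsimp only
      rw [Real.rpow_neg_one t, smul_smul, smul_smul]
      rw [show (∫ ξ : V, (Real.exp (-(π * ‖ξ‖^2 * (1/t))) : ℝ) • f ξ) = h t⁻¹ by
        rw [hh]; dsimp only; rw [one_div]]
      congr 1
      rw [abs_neg, abs_one, one_mul]
      rw [show (t⁻¹ : ℝ) ^ (((n:ℝ)-s)/2 - 1) = t ^ (-((((n:ℝ)-s)/2 - 1))) by
        rw [← Real.rpow_neg_one t, ← Real.rpow_mul ht.le]; congr 1; ring]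
      rw [← Real.rpow_add ht, ← Real.rpow_add ht]
      congr 1
      ring
    rw [step1, integral_comp_rpow_Ioi G (by norm_num : (-1:ℝ) ≠ 0)]
    have step2 : (∫ u in Ioi (0:ℝ), G u)
        = B • ∫ x : V, (‖x‖ ^ (-(((n:ℝ)-s))) : ℝ) • f x := fub hn hns hnsn f
    rw [step2]
    congr 1
    refine integral_congr_ae (Filter.Eventually.of_forall fun x => ?_)
    rw [neg_sub]
  rw [E2] at E1
  calc ∫ x : V, (‖x‖ ^ (-s) : ℝ) • 𝓕 (⇑f) x
      = A⁻¹ • (A • ∫ x : V, (‖x‖ ^ (-s) : ℝ) • 𝓕 (⇑f) x) := by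
        rw [smul_smul, inv_mul_cancel₀ hApos.ne', one_smul]
    _ = A⁻¹ • (B • ∫ x : V, (‖x‖ ^ (s - n) : ℝ) • f x) := by rw [E1]
    _ = (A⁻¹ * B) • ∫ x : V, (‖x‖ ^ (s - n) : ℝ) • f x := by rw [smul_smul]
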